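/- Let G be the unit disk graph on a finite point set in ℝ² with independence number at most 2, and let u, v be non-adjacent vertices such that all points of V(G) lie in one closed half-plane determined by the line through u and v. Then the set of common neighbours N(u) ∩ N(v) is a clique. -/

import Mathlib

lemma key0 (A B s t d : ℝ) (hd : 1 ≤ d) (hs : 0 ≤ s) (hst : s ≤ t)
    (h1 : A^2+s^2 ≤ 1) (h2 : (A-d)^2+s^2 ≤ 1)
    (h3 : B^2+t^2 ≤ 1) (h4 : (B-d)^2+t^2 ≤ 1) :
    (A-B)^2+(s-t)^2 ≤ 1 := by
  have hA0 : d - 1 ≤ A := by nlinarith [sq_nonneg s]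
  have hA1 : A ≤ 1 := by nlinarith [sq_nonneg s]
  have hB0 : d - 1 ≤ B := by nlinarith [sq_nonneg t]
  have hB1 : B ≤ 1 := by nlinarith [sq_nonneg t]
  have hts : (s-t)^2 ≤ t^2 - s^2 := by nlinarith [mul_nonneg hs (sub_nonneg.2 hst)]
  rcases le_or_gt A B with hab | hab
  · have h5 : (A-B)^2 ≤ B^2 := by
      nlinarith [mul_nonneg (by linarith : (0:ℝ) ≤ A) (by linarith : (0:ℝ) ≤ 2*B - A)]
    nlinarith [sq_nonneg s]
  · have h5 : (A-B)^2 ≤ (d-B)^2 := by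
      nlinarith [mul_nonneg (by linarith : (0:ℝ) ≤ d - A) (by linarith : (0:ℝ) ≤ (A-B) + (d-B))]
    nlinarith [sq_nonneg s]

lemma key1 (A B s t d : ℝ) (hd : 1 ≤ d) (hs : 0 ≤ s) (ht : 0 ≤ t)
    (h1 : A^2+s^2 ≤ 1) (h2 : (A-d)^2+s^2 ≤ 1)
    (h3 : B^2+t^2 ≤ 1) (h4 : (B-d)^2+t^2 ≤ 1) :
    (A-B)^2+(s-t)^2 ≤ 1 := by
  rcases le_total s t with h | h
  · exact key0 A B s t d hd hs h h1 h2 h3 h4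
  · have := key0 B A t s d hd ht h h3 h4 h1 h2
    nlinarith [this]

lemma key (A B s t d : ℝ) (hd : 1 ≤ d) (hst : 0 ≤ s*t)
    (h1 : A^2+s^2 ≤ 1) (h2 : (A-d)^2+s^2 ≤ 1)
    (h3 : B^2+t^2 ≤ 1) (h4 : (B-d)^2+t^2 ≤ 1) :
    (A-B)^2+(s-t)^2 ≤ 1 := by
  rcases le_total 0 s with hs | hs <;> rcases le_total 0 t with ht | ht
  · exact key1 A B s t d hd hs ht h1 h2 h3 h4
  · have h0 : s * t = 0 := le_antisymm (mul_nonpos_of_nonneg_of_nonpos hs ht) hst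
    have := key1 A B s (-t) d hd hs (by linarith) h1 h2 (by nlinarith) (by nlinarith)
    nlinarith [this]
  · have h0 : s * t = 0 := le_antisymm (mul_nonpos_of_nonpos_of_nonneg hs ht) hst
    have := key1 A B (-s) t d hd (by linarith) ht (by nlinarith) (by nlinarith) h3 h4
    nlinarith [this]
  · have := key1 A B (-s) (-t) d hd (by linarith) (by linarith)
      (by nlinarith) (by nlinarith) (by nlinarith) (by nlinarith)
    nlinarith [this]
lemma key2x (p0 p1 q0 q1 E0 E1 : ℝ)
    (hd : 1 < E0^2+E1^2)
    (h1 : p0^2+p1^2 ≤ 1) (h2 : (p0-E0)^2+(p1-E1)^2 ≤ 1)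
    (h3 : q0^2+q1^2 ≤ 1) (h4 : (q0-E0)^2+(q1-E1)^2 ≤ 1)
    (h5 : 0 ≤ (E0*p1-E1*p0)*(E0*q1-E1*q0)) :
    (p0-q0)^2+(p1-q1)^2 ≤ 1 := by
  set d := Real.sqrt (E0^2+E1^2) with hdef
  have hd2 : d^2 = E0^2+E1^2 := Real.sq_sqrt (by positivity)
  have hd0 : 0 < d := Real.sqrt_pos.2 (by linarith)
  have hd1 : 1 ≤ d := by nlinarith
  have hA1 : ((p0*E0+p1*E1)/d)^2 + ((E0*p1-E1*p0)/d)^2 = p0^2+p1^2 := by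
    field_simp
    linear_combination (-(p0^2+p1^2)) * hd2
  have hA2 : ((p0*E0+p1*E1)/d - d)^2 + ((E0*p1-E1*p0)/d)^2 = (p0-E0)^2+(p1-E1)^2 := by
    field_simp
    linear_combination (d^2 + (E0^2+E1^2) - 2*(p0*E0+p1*E1) - ((p0-E0)^2+(p1-E1)^2)) * hd2
  have hB1 : ((q0*E0+q1*E1)/d)^2 + ((E0*q1-E1*q0)/d)^2 = q0^2+q1^2 := by
    field_simp
    linear_combination (-(q0^2+q1^2)) * hd2
  have hB2 : ((q0*E0+q1*E1)/d - d)^2 + ((E0*q1-E1*q0)/d)^2 = (q0-E0)^2+(q1-E1)^2 := by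
    field_simp
    linear_combination (d^2 + (E0^2+E1^2) - 2*(q0*E0+q1*E1) - ((q0-E0)^2+(q1-E1)^2)) * hd2
  have hst : 0 ≤ ((E0*p1-E1*p0)/d) * ((E0*q1-E1*q0)/d) := by
    rw [div_mul_div_comm]
    exact div_nonneg h5 (by positivity)
  have := key ((p0*E0+p1*E1)/d) ((q0*E0+q1*E1)/d) ((E0*p1-E1*p0)/d) ((E0*q1-E1*q0)/d) d
    hd1 hst (by rw [hA1]; exact h1) (by rw [hA2]; exact h2) (by rw [hB1]; exact h3)
    (by rw [hB2]; exact h4)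
  have hgoal : ((p0*E0+p1*E1)/d - (q0*E0+q1*E1)/d)^2 + ((E0*p1-E1*p0)/d - (E0*q1-E1*q0)/d)^2
      = (p0-q0)^2+(p1-q1)^2 := by
    field_simp
    linear_combination (-((p0-q0)^2+(p1-q1)^2)) * hd2
  linarith [hgoal ▸ this]
lemma main_ineq (c0 c1 u0 u1 v0 v1 w0 w1 z0 z1 : ℝ)
    (hc2 : 0 < c0^2 + c1^2)
    (hEc : c0*(v0-u0) + c1*(v1-u1) = 0)
    (hcp : c0*(w0-u0) + c1*(w1-u1) ≤ 0)
    (hcq : c0*(z0-u0) + c1*(z1-u1) ≤ 0)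
    (hd : 1 < (v0-u0)^2 + (v1-u1)^2)
    (h1 : (w0-u0)^2+(w1-u1)^2 ≤ 1) (h2 : (w0-v0)^2+(w1-v1)^2 ≤ 1)
    (h3 : (z0-u0)^2+(z1-u1)^2 ≤ 1) (h4 : (z0-v0)^2+(z1-v1)^2 ≤ 1) :
    (w0-z0)^2+(w1-z1)^2 ≤ 1 := by
  have hprod : 0 ≤ (c0*(w0-u0) + c1*(w1-u1))*(c0*(z0-u0) + c1*(z1-u1)) := by
    nlinarith [mul_nonneg (neg_nonneg.2 hcp) (neg_nonneg.2 hcq)]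
  have J1 : ((v0-u0)*(w1-u1)-(v1-u1)*(w0-u0)) * (c0^2+c1^2)
      = ((v0-u0)*c1-(v1-u1)*c0) * (c0*(w0-u0) + c1*(w1-u1)) := by
    linear_combination (c0*(w1-u1) - c1*(w0-u0)) * hEc
  have J2 : ((v0-u0)*(z1-u1)-(v1-u1)*(z0-u0)) * (c0^2+c1^2)
      = ((v0-u0)*c1-(v1-u1)*c0) * (c0*(z0-u0) + c1*(z1-u1)) := by
    linear_combination (c0*(z1-u1) - c1*(z0-u0)) * hEc
  have I3 : ((v0-u0)*(w1-u1)-(v1-u1)*(w0-u0)) * ((v0-u0)*(z1-u1)-(v1-u1)*(z0-u0))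
        * ((c0^2+c1^2)*(c0^2+c1^2))
      = ((v0-u0)*c1-(v1-u1)*c0)^2
        * ((c0*(w0-u0) + c1*(w1-u1))*(c0*(z0-u0) + c1*(z1-u1))) := by
    linear_combination (((v0-u0)*(z1-u1)-(v1-u1)*(z0-u0)) * (c0^2+c1^2)) * J1
      + (((v0-u0)*c1-(v1-u1)*c0) * (c0*(w0-u0) + c1*(w1-u1))) * J2
  have h5 : 0 ≤ ((v0-u0)*(w1-u1)-(v1-u1)*(w0-u0)) * ((v0-u0)*(z1-u1)-(v1-u1)*(z0-u0)) := by
    by_contra hneg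
    push_neg at hneg
    have hXY := mul_neg_of_neg_of_pos hneg (mul_pos hc2 hc2)
    rw [I3] at hXY
    exact absurd hXY (not_lt.2 (mul_nonneg (sq_nonneg _) hprod))
  have e2 : ((w0-u0)-(v0-u0))^2+((w1-u1)-(v1-u1))^2 = (w0-v0)^2+(w1-v1)^2 := by ring
  have e4 : ((z0-u0)-(v0-u0))^2+((z1-u1)-(v1-u1))^2 = (z0-v0)^2+(z1-v1)^2 := by ring
  have hk := key2x (w0-u0) (w1-u1) (z0-u0) (z1-u1) (v0-u0) (v1-u1) hd
    h1 (by linarith [e2, h2]) h3 (by linarith [e4, h4]) h5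
  have e5 : ((w0-u0)-(z0-u0))^2+((w1-u1)-(z1-u1))^2 = (w0-z0)^2+(w1-z1)^2 := by ring
  linarith [hk, e5]

lemma dist_sq_two (x y : EuclideanSpace ℝ (Fin 2)) :
    dist x y ^ 2 = (x 0 - y 0)^2 + (x 1 - y 1)^2 := by
  rw [EuclideanSpace.dist_eq, Real.sq_sqrt (by positivity)]
  simp [Fin.sum_univ_two, Real.dist_eq, sq_abs]

lemma dist_le_one_sq (x y : EuclideanSpace ℝ (Fin 2)) (h : dist x y ≤ 1) :
    (x 0 - y 0)^2 + (x 1 - y 1)^2 ≤ 1 := by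
  have h2 := dist_sq_two x y
  have h0 : (0:ℝ) ≤ dist x y := dist_nonneg
  nlinarith

lemma one_lt_dist_sq (x y : EuclideanSpace ℝ (Fin 2)) (h : 1 < dist x y) :
    1 < (x 0 - y 0)^2 + (x 1 - y 1)^2 := by
  have h2 := dist_sq_two x y
  have h0 : (0:ℝ) ≤ dist x y := dist_nonneg
  nlinarith

/-- If a unit disk graph has independence number at most 2 and `u, v` are non-adjacent
vertices with all of `V` on one side of the line through `u` and `v`, then the set of
common neighbours of `u` and `v` is a clique. -/
theorem stmt_11 (V : Finset (EuclideanSpace ℝ (Fin 2)))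
    (hα : ∀ a ∈ V, ∀ b ∈ V, ∀ c ∈ V, a ≠ b → a ≠ c → b ≠ c →
      dist a b ≤ 1 ∨ dist a c ≤ 1 ∨ dist b c ≤ 1)
    (u v : EuclideanSpace ℝ (Fin 2)) (hu : u ∈ V) (hv : v ∈ V)
    (huv : 1 < dist u v)
    (f : EuclideanSpace ℝ (Fin 2) →ₗ[ℝ] ℝ) (hf : f ≠ 0)
    (hfu : f u = f v) (hside : ∀ w ∈ V, f w ≤ f u) :
    ∀ w ∈ V, ∀ z ∈ V, dist w u ≤ 1 → dist w v ≤ 1 → dist z u ≤ 1 → dist z v ≤ 1 →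
      dist w z ≤ 1 := by
  intro w hw z hz hwu hwv hzu hzv
  obtain ⟨c0, hc0⟩ : ∃ c, c = f (EuclideanSpace.single 0 1) := ⟨_, rfl⟩
  obtain ⟨c1, hc1⟩ : ∃ c, c = f (EuclideanSpace.single 1 1) := ⟨_, rfl⟩
  have hrepr : ∀ x : EuclideanSpace ℝ (Fin 2),
      x = x 0 • EuclideanSpace.single 0 (1:ℝ) + x 1 • EuclideanSpace.single 1 1 := by
    intro x
    refine PiLp.ext fun i => ?_
    fin_cases i <;> simp [EuclideanSpace.single_apply]
  have hflin : ∀ x : EuclideanSpace ℝ (Fin 2), f x = x 0 * c0 + x 1 * c1 := by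
    intro x
    conv_lhs => rw [hrepr x]
    simp [map_add, map_smul, smul_eq_mul, ← hc0, ← hc1]
  have hc : c0 ≠ 0 ∨ c1 ≠ 0 := by
    by_contra h
    push_neg at h
    apply hf
    apply LinearMap.ext
    intro x
    rw [hflin x, h.1, h.2]
    simp
  have hc2 : 0 < c0^2 + c1^2 := by
    rcases hc with h | h <;> nlinarith [sq_nonneg c0, sq_nonneg c1, mul_self_pos.2 h]
  have h1 := hflin u
  have h2 := hflin v
  have h3 := hflin w
  have h4 := hflin z
  have hEc : c0*(v 0 - u 0) + c1*(v 1 - u 1) = 0 := by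
    rw [hfu] at h1
    linear_combination h1 - h2
  have hcp : c0*(w 0 - u 0) + c1*(w 1 - u 1) ≤ 0 := by
    have h5 := hside w hw
    have e : c0*(w 0 - u 0) + c1*(w 1 - u 1)
        = (w 0 * c0 + w 1 * c1) - (u 0 * c0 + u 1 * c1) := by ring
    rw [e, ← h1, ← h3]
    linarith
  have hcq : c0*(z 0 - u 0) + c1*(z 1 - u 1) ≤ 0 := by
    have h5 := hside z hz
    have e : c0*(z 0 - u 0) + c1*(z 1 - u 1)
        = (z 0 * c0 + z 1 * c1) - (u 0 * c0 + u 1 * c1) := by ring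
    rw [e, ← h1, ← h4]
    linarith
  have hvu : 1 < dist v u := by rw [dist_comm]; exact huv
  have hmain := main_ineq c0 c1 (u 0) (u 1) (v 0) (v 1) (w 0) (w 1) (z 0) (z 1)
    hc2 hEc hcp hcq (one_lt_dist_sq v u hvu)
    (dist_le_one_sq w u hwu) (dist_le_one_sq w v hwv)
    (dist_le_one_sq z u hzu) (dist_le_one_sq z v hzv)
  have h0 : (0:ℝ) ≤ dist w z := dist_nonneg
  have hsq := dist_sq_two w z
  nlinarith [hmain, h0, hsq]
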